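/- Let t ≥ 1 and let H be a graph consisting of a cycle C_0 together with 2t − 2 chords of C_0 all incident with one common vertex x of C_0 (a chord is an edge joining two vertices of C_0 that are not adjacent on C_0). If H is non-bipartite, then H has at least t distinct odd cycle lengths. -/

import Mathlib

open SimpleGraph

/-- `G` contains a cycle of length `n`. -/
def SimpleGraph.HasCycleLength {V : Type*} (G : SimpleGraph V) (n : ℕ) : Prop :=
  ∃ (v : V) (c : G.Walk v v), c.IsCycle ∧ c.length = n

/-- `L_o(G)`: the set of odd cycle lengths of `G`. -/
def SimpleGraph.oddCycleLengths {V : Type*} (G : SimpleGraph V) : Set ℕ :=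
  {n | Odd n ∧ G.HasCycleLength n}

/-- `L_e(G)`: the set of even cycle lengths of `G`. -/
def SimpleGraph.evenCycleLengths {V : Type*} (G : SimpleGraph V) : Set ℕ :=
  {n | Even n ∧ G.HasCycleLength n}

/-- `G` is 2-connected: at least 3 vertices, and deleting any single vertex
leaves a connected graph. -/
def SimpleGraph.TwoConnected {V : Type*} [Fintype V] (G : SimpleGraph V) : Prop :=
  3 ≤ Fintype.card V ∧ ∀ v : V, (G.induce {v}ᶜ).Connected

namespace SimpleGraph.Walk
variable {V : Type*} {G : SimpleGraph V} {x : V}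

lemma edge_mem_of_idx {u v : V} (w : G.Walk u v) {i : ℕ} (hi : i < w.length) :
    s(w.getVert i, w.getVert (i+1)) ∈ w.edges := by
  induction w generalizing i with
  | nil => simp at hi
  | cons h p ih =>
    cases i with
    | zero => simp [getVert_cons_succ]
    | succ i =>
      simp only [getVert_cons_succ, edges_cons, List.mem_cons]
      exact Or.inr (ih (by simp at hi; omega))

lemma exists_idx_of_edge_mem {u v : V} (w : G.Walk u v) {e : Sym2 V} (he : e ∈ w.edges) :
    ∃ i < w.length, e = s(w.getVert i, w.getVert (i+1)) := by
  induction w with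
  | nil => simp at he
  | cons h p ih =>
    simp only [edges_cons, List.mem_cons] at he
    rcases he with rfl | he
    · exact ⟨0, by simp, by simp [getVert_cons_succ]⟩
    · obtain ⟨i, hi, rfl⟩ := ih he
      exact ⟨i+1, by simp; omega, by simp [getVert_cons_succ]⟩

lemma getVert_eq_support_getElem' {u v : V} (w : G.Walk u v) {i : ℕ} (hi : i ≤ w.length) :
    w.getVert i = w.support[i]'(by rw [length_support]; omega) := by
  induction w generalizing i with
  | nil =>
    simp only [length_nil, Nat.le_zero] at hi
    subst hi; simp
  | cons h p ih =>
    cases i with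
    | zero => simp
    | succ i =>
      simp only [getVert_cons_succ, support_cons]
      rw [ih (by simpa using hi)]
      simp

lemma exists_seg (c : G.Walk x x) (i : ℕ) : ∀ j, i ≤ j → j ≤ c.length →
    ∃ w : G.Walk (c.getVert i) (c.getVert j), w.length = j - i ∧
      w.support = (List.range' i (j - i + 1)).map c.getVert ∧
      (∀ e ∈ w.edges, ∃ l, i ≤ l ∧ l < j ∧ e = s(c.getVert l, c.getVert (l+1))) := by
  intro j hij
  induction j, hij using Nat.le_induction with
  | base =>
    exact fun _ => ⟨Walk.nil, by simp, by simp, by simp⟩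
  | succ j hij ih =>
    intro hj
    obtain ⟨w, hlen, hsup, hedg⟩ := ih (by omega)
    refine ⟨w.concat (c.adj_getVert_succ (i := j) (by omega)), ?_, ?_, ?_⟩
    · rw [length_concat]; omega
    · have h3 : List.range' i (j + 1 - i + 1) = List.range' i (j - i + 1) ++ [j+1] := by
        rw [show j+1-i+1 = (j-i+1)+1 from by omega, List.range'_concat,
          show i+1*(j-i+1) = j+1 from by omega]
      rw [support_concat, hsup, h3, List.map_append]
      simp
    · intro e he
      rw [edges_concat, List.concat_eq_append, List.mem_append] at he
      rcases he with he | he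
      · obtain ⟨l, h1, h2, h3⟩ := hedg e he
        exact ⟨l, h1, by omega, h3⟩
      · simp only [List.mem_singleton] at he
        exact ⟨j, by omega, by omega, he⟩

lemma gv_tail {c : G.Walk x x} {k : ℕ} (hk : k < c.length) :
    c.getVert (k+1) = c.support.tail[k]'(by
      have h1 := c.length_support
      have h2 := c.support.length_tail
      omega) := by
  rw [getVert_eq_support_getElem' c (by omega), List.getElem_tail]

lemma gv_inj1 {c : G.Walk x x} (hcy : c.IsCycle) :
    ∀ i j, 1 ≤ i → i ≤ c.length → 1 ≤ j → j ≤ c.length →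
      c.getVert i = c.getVert j → i = j := by
  intro i j hi1 hin hj1 hjn hgv
  have htail : c.support.tail.Nodup := hcy.support_nodup
  obtain ⟨i', rfl⟩ : ∃ i', i = i'+1 := ⟨i-1, by omega⟩
  obtain ⟨j', rfl⟩ : ∃ j', j = j'+1 := ⟨j-1, by omega⟩
  rw [gv_tail (by omega), gv_tail (by omega)] at hgv
  have := (htail.getElem_inj_iff).mp hgv
  omega

lemma gv_ne_x {c : G.Walk x x} (hcy : c.IsCycle) {i : ℕ} (hi1 : 1 ≤ i)
    (hi2 : i ≤ c.length - 1) : c.getVert i ≠ x := by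
  intro h
  have h3 := hcy.three_le_length
  have := gv_inj1 hcy i c.length hi1 (by omega) (by omega) le_rfl
    (by rw [h, c.getVert_length])
  omega

lemma gv_injlt {c : G.Walk x x} (hcy : c.IsCycle) :
    ∀ i j, i < c.length → j < c.length → c.getVert i = c.getVert j → i = j := by
  intro i j hi hj hgv
  have h3 := hcy.three_le_length
  rcases Nat.eq_zero_or_pos i with rfl | hi1
  · rcases Nat.eq_zero_or_pos j with rfl | hj1
    · rfl
    · exact absurd (by rw [← hgv, c.getVert_zero]) (gv_ne_x hcy hj1 (by omega))
  · rcases Nat.eq_zero_or_pos j with rfl | hj1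
    · exact absurd (by rw [hgv, c.getVert_zero]) (gv_ne_x hcy hi1 (by omega))
    · exact gv_inj1 hcy i j hi1 (by omega) hj1 (by omega) hgv

lemma hasCycleLength_near {c : G.Walk x x} (hcy : c.IsCycle) {p : ℕ}
    (h2 : 2 ≤ p) (hp : p ≤ c.length - 2) (hadj : G.Adj x (c.getVert p)) :
    G.HasCycleLength (p+1) := by
  have hn3 := hcy.three_le_length
  obtain ⟨w, hlen, hsup, hedg⟩ := exists_seg c 0 p (by omega) (by omega)
  set q := (w.copy c.getVert_zero rfl).reverse with hq
  refine ⟨x, Walk.cons hadj q, ?_, ?_⟩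
  · rw [cons_isCycle_iff]
    constructor
    · rw [hq, isPath_reverse_iff, isPath_copy]
      refine IsPath.mk' ?_
      rw [hsup]
      refine List.Nodup.map_on ?_ List.nodup_range'
      intro a ha b hb hab
      rw [List.mem_range'_1] at ha hb
      exact gv_injlt hcy a b (by omega) (by omega) hab
    · intro hmem
      rw [hq, edges_reverse, List.mem_reverse, edges_copy] at hmem
      obtain ⟨l, hl0, hlp, hle⟩ := hedg _ hmem
      rw [Sym2.eq_iff] at hle
      rcases hle with ⟨hx, hgp⟩ | ⟨hx, hgp⟩
      · have hx0 : c.getVert 0 = c.getVert l := by rw [c.getVert_zero]; exact hx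
        have h0 : 0 = l := gv_injlt hcy 0 l (by omega) (by omega) hx0
        have : p = l + 1 := gv_injlt hcy p (l+1) (by omega) (by omega) hgp
        omega
      · have hx0 : c.getVert 0 = c.getVert (l+1) := by rw [c.getVert_zero]; exact hx
        have : 0 = l + 1 := gv_injlt hcy 0 (l+1) (by omega) (by omega) hx0
        omega
  · simp [hq, hlen]

lemma hasCycleLength_far {c : G.Walk x x} (hcy : c.IsCycle) {p : ℕ}
    (h2 : 2 ≤ p) (hp : p ≤ c.length - 2) (hadj : G.Adj x (c.getVert p)) :
    G.HasCycleLength (c.length - p + 1) := by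
  have hn3 := hcy.three_le_length
  obtain ⟨w, hlen, hsup, hedg⟩ := exists_seg c p c.length (by omega) le_rfl
  set q := w.copy rfl c.getVert_length with hq
  refine ⟨x, Walk.cons hadj q, ?_, ?_⟩
  · rw [cons_isCycle_iff]
    constructor
    · rw [hq, isPath_copy]
      refine IsPath.mk' ?_
      rw [hsup]
      refine List.Nodup.map_on ?_ List.nodup_range'
      intro a ha b hb hab
      rw [List.mem_range'_1] at ha hb
      exact gv_inj1 hcy a b (by omega) (by omega) (by omega) (by omega) hab
    · intro hmem
      rw [hq, edges_copy] at hmem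
      obtain ⟨l, hl0, hlp, hle⟩ := hedg _ hmem
      rw [Sym2.eq_iff] at hle
      rcases hle with ⟨hx, hgp⟩ | ⟨hx, hgp⟩
      · exact gv_ne_x hcy (by omega) (by omega) hx.symm
      · have h1 : l + 1 = c.length := by
          by_contra hne
          exact gv_ne_x hcy (by omega) (by omega) hx.symm
        have : p = l := gv_inj1 hcy p l (by omega) (by omega) (by omega) (by omega) hgp
        omega
  · simp [hq, hlen]

lemma hasCycleLength_two_chords {c : G.Walk x x} (hcy : c.IsCycle) {p q : ℕ}
    (h2 : 2 ≤ p) (hpq : p < q) (hq2 : q ≤ c.length - 2)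
    (hadjp : G.Adj x (c.getVert p)) (hadjq : G.Adj x (c.getVert q)) :
    G.HasCycleLength (q - p + 2) := by
  have hn3 := hcy.three_le_length
  obtain ⟨w, hlen, hsup, hedg⟩ := exists_seg c p q (by omega) (by omega)
  set inner := w.concat hadjq.symm with hinner
  refine ⟨x, Walk.cons hadjp inner, ?_, ?_⟩
  · rw [cons_isCycle_iff]
    have hxw : x ∉ w.support := by
      intro hx
      rw [hsup, List.mem_map] at hx
      obtain ⟨a, ha, hax⟩ := hx
      rw [List.mem_range'_1] at ha
      exact gv_ne_x hcy (i := a) (by omega) (by omega) hax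
    constructor
    · refine IsPath.mk' ?_
      rw [hinner, support_concat, List.nodup_append]
      refine ⟨?_, by simp, fun a ha b hb => by simp at hb; subst hb; exact fun h => hxw (h ▸ ha)⟩
      rw [hsup]
      refine List.Nodup.map_on ?_ List.nodup_range'
      intro a ha b hb hab
      rw [List.mem_range'_1] at ha hb
      exact gv_inj1 hcy a b (by omega) (by omega) (by omega) (by omega) hab
    · intro hmem
      rw [hinner, edges_concat, List.concat_eq_append, List.mem_append] at hmem
      rcases hmem with hmem | hmem
      · obtain ⟨l, hl0, hlp, hle⟩ := hedg _ hmem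
        rw [Sym2.eq_iff] at hle
        rcases hle with ⟨hx, hgp⟩ | ⟨hx, hgp⟩
        · exact gv_ne_x hcy (by omega) (by omega) hx.symm
        · exact gv_ne_x hcy (i := l+1) (by omega) (by omega) hx.symm
      · simp only [List.mem_singleton, Sym2.eq_iff] at hmem
        rcases hmem with ⟨hx, hgp⟩ | ⟨hx, hgp⟩
        · exact gv_ne_x hcy (by omega) (by omega) hx.symm
        · have : p = q := gv_inj1 hcy p q (by omega) (by omega) (by omega) (by omega) hgp
          omega
  · simp [hinner, hlen]

lemma parity_col (col : V → ℕ)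
    (hcol : ∀ u v, G.Adj u v → ¬ col u % 2 = col v % 2) :
    ∀ {u v : V} (w : G.Walk u v), (col u + w.length) % 2 = col v % 2 := by
  intro u v w
  induction w with
  | nil => simp
  | @cons a b _ h p ih =>
    have := hcol _ _ h
    simp only [length_cons] at *
    omega

lemma IsCycle.length_le_card' [Fintype V] {u : V} {w : G.Walk u u}
    (h : w.IsCycle) : w.length ≤ Fintype.card V := by
  have h1 := h.support_nodup.length_le_card
  have h2 := w.length_support
  have h3 : w.support.tail.length = w.support.length - 1 := w.support.length_tail
  omega

end SimpleGraph.Walk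

open SimpleGraph.Walk Finset

/-- Let `H` consist of a (spanning) cycle `c` together with `2t - 2`
chords all incident with the vertex `x` (`t ≥ 1`). If `H` is non-bipartite, then `H` has
at least `t` distinct odd cycle lengths. -/
theorem odd_cycle_lengths_of_chords {V : Type*} [Fintype V] [DecidableEq V]
    (H : SimpleGraph V) [DecidableRel H.Adj] (t : ℕ) (ht : 1 ≤ t)
    (x : V) (c : H.Walk x x) (hc : c.IsHamiltonianCycle)
    (hchords : (H.edgeFinset \ c.edges.toFinset).card = 2 * t - 2)
    (hinc : ∀ e ∈ H.edgeFinset \ c.edges.toFinset, x ∈ e)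
    (hnonbip : (H.oddCycleLengths).Nonempty) :
    t ≤ (H.oddCycleLengths).ncard := by
  classical
  have hcy := hc.isCycle
  have hn3 : 3 ≤ c.length := hcy.three_le_length
  -- the chord position set
  set Pset := (Finset.Icc 2 (c.length-2)).filter
      (fun p => H.Adj x (c.getVert p) ∧ s(x, c.getVert p) ∉ c.edges) with hPsetdef
  have hPmem : ∀ p ∈ Pset, 2 ≤ p ∧ p ≤ c.length - 2 ∧ H.Adj x (c.getVert p) := by
    intro p hp
    rw [hPsetdef, mem_filter, Finset.mem_Icc] at hp
    exact ⟨hp.1.1, hp.1.2, hp.2.1⟩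
  have hPmem2 : ∀ p ∈ Pset, s(x, c.getVert p) ∉ c.edges := by
    intro p hp
    rw [hPsetdef, mem_filter] at hp
    exact hp.2.2
  have hchordP : ∀ e ∈ H.edgeFinset \ c.edges.toFinset, ∃ p ∈ Pset, e = s(x, c.getVert p) := by
    intro e he
    rw [Finset.mem_sdiff] at he
    obtain ⟨heH, hec⟩ := he
    have hx : x ∈ e := hinc e (by rw [Finset.mem_sdiff]; exact ⟨heH, hec⟩)
    obtain ⟨u, rfl⟩ := Sym2.mem_iff_exists.mp hx
    rw [SimpleGraph.mem_edgeFinset, SimpleGraph.mem_edgeSet] at heH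
    have hux : u ≠ x := heH.ne'
    have hu : u ∈ c.support := hc.mem_support u
    rw [Walk.mem_support_iff_exists_getVert] at hu
    obtain ⟨i, hgv, hile⟩ := hu
    have hine0 : i ≠ 0 := by rintro rfl; rw [c.getVert_zero] at hgv; exact hux hgv.symm
    have hinen : i ≠ c.length := by
      rintro rfl; rw [c.getVert_length] at hgv; exact hux hgv.symm
    have hec' : s(x, c.getVert i) ∉ c.edges := by
      rw [hgv]; exact fun hh => hec (List.mem_toFinset.mpr hh)
    have hine1 : i ≠ 1 := by
      rintro rfl
      apply hec'
      have h0 := c.edge_mem_of_idx (i := 0) (by omega)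
      rw [c.getVert_zero] at h0
      exact h0
    have hinen1 : i ≠ c.length - 1 := by
      rintro rfl
      apply hec'
      have h0 := c.edge_mem_of_idx (i := c.length - 1) (by omega)
      rw [show c.length - 1 + 1 = c.length from by omega, c.getVert_length] at h0
      rwa [Sym2.eq_swap] at h0
    refine ⟨i, ?_, by rw [hgv]⟩
    rw [hPsetdef, mem_filter, Finset.mem_Icc]
    exact ⟨⟨by omega, by omega⟩, by rw [hgv]; exact heH, hec'⟩
  have hPcard : Pset.card = 2 * t - 2 := by
    rw [← hchords]
    apply Finset.card_bij (fun p _ => s(x, c.getVert p))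
    · intro p hp
      obtain ⟨h2, hpn, hadj⟩ := hPmem p hp
      rw [Finset.mem_sdiff, SimpleGraph.mem_edgeFinset, SimpleGraph.mem_edgeSet]
      exact ⟨hadj, fun hh => hPmem2 p hp (List.mem_toFinset.mp hh)⟩
    · intro p hp q hq hpq
      rw [Sym2.eq_iff] at hpq
      obtain ⟨h2p, hpn, _⟩ := hPmem p hp
      obtain ⟨h2q, hqn, _⟩ := hPmem q hq
      rcases hpq with ⟨-, hg⟩ | ⟨hx1, hx2⟩
      · exact gv_injlt hcy p q (by omega) (by omega) hg
      · exact absurd hx1.symm (gv_ne_x hcy (i := q) (by omega) (by omega))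
    · intro e he
      obtain ⟨p, hp, hep⟩ := hchordP e he
      exact ⟨p, hp, hep.symm⟩
  -- reduce to finding a suitable finset of odd cycle lengths
  have key : ∀ F : Finset ℕ, (∀ ℓ ∈ F, ℓ ∈ H.oddCycleLengths) → F.card ≤ H.oddCycleLengths.ncard := by
    intro F hF
    have h1 : H.oddCycleLengths ⊆ Set.Iic (Fintype.card V) := by
      rintro ℓ ⟨hodd, v, w, hw, rfl⟩
      exact hw.length_le_card'
    calc F.card = (↑F : Set ℕ).ncard := (Set.ncard_coe_finset F).symm
      _ ≤ _ := Set.ncard_le_ncard (fun ℓ hℓ => hF ℓ (by simpa using hℓ))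
          ((Set.finite_Iic _).subset h1)
  rcases Nat.even_or_odd c.length with hnev | hnodd
  · -- n even
    have hn0 : c.length % 2 = 0 := Nat.even_iff.mp hnev
    set E := Pset.filter (fun p => p % 2 = 0) with hEdef
    set O := Pset.filter (fun p => ¬ p % 2 = 0) with hOdef
    have hEO : E.card + O.card = 2*t - 2 := by
      rw [hEdef, hOdef, Finset.card_filter_add_card_filter_not, hPcard]
    have hEmem : ∀ p ∈ E, p % 2 = 0 ∧ 2 ≤ p ∧ p ≤ c.length - 2 ∧ H.Adj x (c.getVert p) := by
      intro p hp
      rw [hEdef, mem_filter] at hp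
      obtain ⟨h1, h2, h3⟩ := hPmem p hp.1
      exact ⟨hp.2, h1, h2, h3⟩
    have hOmem : ∀ p ∈ O, p % 2 = 1 ∧ 2 ≤ p ∧ p ≤ c.length - 2 ∧ H.Adj x (c.getVert p) := by
      intro p hp
      rw [hOdef, mem_filter] at hp
      obtain ⟨h1, h2, h3⟩ := hPmem p hp.1
      have := hp.2
      exact ⟨by omega, h1, h2, h3⟩
    have hE : E.Nonempty := by
      rw [Finset.nonempty_iff_ne_empty]
      intro hEemp
      have hallodd : ∀ p ∈ Pset, p % 2 = 1 := by
        intro p hp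
        by_contra hne
        have hmem : p ∈ E := by rw [hEdef, mem_filter]; exact ⟨hp, by omega⟩
        rw [hEemp] at hmem
        simp at hmem
      have hex : ∀ v : V, ∃ i, i < c.length ∧ c.getVert i = v := by
        intro v
        have hv := hc.mem_support v
        rw [Walk.mem_support_iff_exists_getVert] at hv
        obtain ⟨i, hgv, hile⟩ := hv
        rcases Nat.lt_or_ge i c.length with hlt | hge
        · exact ⟨i, hlt, hgv⟩
        · have : i = c.length := by omega
          subst this
          exact ⟨0, by omega, by rw [c.getVert_zero, ← hgv, c.getVert_length]⟩
      choose pos hposlt hposgv using hex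
      have hposgv' : ∀ i, i < c.length → pos (c.getVert i) = i := fun i hi =>
        gv_injlt hcy _ i (hposlt _) hi (hposgv _)
      have hposx : pos x = 0 := by
        have := hposgv' 0 (by omega)
        rwa [c.getVert_zero] at this
      have hcol : ∀ u v, H.Adj u v → ¬ pos u % 2 = pos v % 2 := by
        intro u v huv
        have he : s(u,v) ∈ H.edgeFinset := by
          rw [SimpleGraph.mem_edgeFinset]
          exact huv
        by_cases hce : s(u,v) ∈ c.edges
        · obtain ⟨i, hi, hei⟩ := c.exists_idx_of_edge_mem hce
          have hstep : ∀ a b : V, a = c.getVert i → b = c.getVert (i+1) →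
              ¬ pos a % 2 = pos b % 2 := by
            intro a b ha hb
            subst ha; subst hb
            rw [hposgv' i hi]
            rcases Nat.lt_or_ge (i+1) c.length with hlt | hge
            · rw [hposgv' (i+1) hlt]; omega
            · have hieq : i + 1 = c.length := by omega
              have hgx : c.getVert (i+1) = x := by rw [hieq, c.getVert_length]
              rw [hgx, hposx]
              omega
          rw [Sym2.eq_iff] at hei
          rcases hei with ⟨ha, hb⟩ | ⟨ha, hb⟩
          · exact hstep u v ha hb
          · intro hh
            exact (hstep v u hb ha) hh.symm
        · have hdiff : s(u,v) ∈ H.edgeFinset \ c.edges.toFinset := by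
            rw [Finset.mem_sdiff]
            exact ⟨he, fun hh => hce (List.mem_toFinset.mp hh)⟩
          obtain ⟨p, hp, hep⟩ := hchordP _ hdiff
          have hpodd := hallodd p hp
          obtain ⟨h2, hpn, _⟩ := hPmem p hp
          have hpp : pos (c.getVert p) = p := hposgv' p (by omega)
          rw [Sym2.eq_iff] at hep
          rcases hep with ⟨ha, hb⟩ | ⟨ha, hb⟩
          · rw [ha, hb, hposx, hpp]; omega
          · rw [ha, hb, hposx, hpp]; omega
      obtain ⟨ℓ, hℓodd, v, w, hwcyc, hwlen⟩ := hnonbip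
      have hpar := parity_col pos hcol w
      rw [hwlen] at hpar
      rw [Nat.odd_iff] at hℓodd
      omega
    have hcardE : 1 ≤ E.card := Finset.card_pos.mpr hE
    rcases Finset.eq_empty_or_nonempty O with hOemp | hO
    · -- no odd chords
      have hkcard : E.card = 2*t - 2 := by
        rw [hOemp] at hEO
        simpa using hEO
      refine le_trans ?_ (key (E.image (fun p => p + 1)) ?_)
      · rw [Finset.card_image_of_injective _ (fun a b h => by omega)]
        omega
      · intro ℓ hℓ
        rw [Finset.mem_image] at hℓ
        obtain ⟨p, hp, rfl⟩ := hℓ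
        obtain ⟨hpar, h2, hpn, hadj⟩ := hEmem p hp
        exact ⟨Nat.odd_iff.mpr (by omega), hasCycleLength_near hcy h2 hpn hadj⟩
    · -- both types of chords
      have hcardO : 1 ≤ O.card := Finset.card_pos.mpr hO
      set a0 := E.min' hE with ha0def
      set a1 := E.max' hE with ha1def
      set b0 := O.min' hO with hb0def
      obtain ⟨ha0par, ha0_2, ha0n, ha0adj⟩ := hEmem a0 (E.min'_mem hE)
      obtain ⟨ha1par, ha1_2, ha1n, ha1adj⟩ := hEmem a1 (E.max'_mem hE)
      obtain ⟨hb0par, hb0_2, hb0n, hb0adj⟩ := hOmem b0 (O.min'_mem hO)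
      set D := (E.image (fun a : ℕ => (b0:ℤ) - (a:ℤ))) ∪ (O.image (fun b : ℕ => (b:ℤ) - (a0:ℤ))) with hDdef
      have hDcard : E.card + O.card - 1 ≤ D.card := by
        have h1 : (E.image (fun a : ℕ => (b0:ℤ) - (a:ℤ))).card = E.card :=
          Finset.card_image_of_injective _ (fun a b h => by omega)
        have h2 : (O.image (fun b : ℕ => (b:ℤ) - (a0:ℤ))).card = O.card :=
          Finset.card_image_of_injective _ (fun a b h => by omega)
        have h3 := Finset.card_union_add_card_inter (E.image (fun a : ℕ => (b0:ℤ) - (a:ℤ)))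
          (O.image (fun b : ℕ => (b:ℤ) - (a0:ℤ)))
        have h4 : ((E.image (fun a : ℕ => (b0:ℤ) - (a:ℤ))) ∩ (O.image (fun b : ℕ => (b:ℤ) - (a0:ℤ)))).card ≤ 1 := by
          refine Finset.card_le_one.mpr ?_
          intro z hz z' hz'
          rw [Finset.mem_inter] at hz hz'
          obtain ⟨a, ha, hza⟩ := Finset.mem_image.mp hz.1
          obtain ⟨b, hb, hzb⟩ := Finset.mem_image.mp hz.2
          obtain ⟨a', ha', hza'⟩ := Finset.mem_image.mp hz'.1
          obtain ⟨b', hb', hzb'⟩ := Finset.mem_image.mp hz'.2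
          have h5 : a0 ≤ a := E.min'_le a ha
          have h6 : b0 ≤ b := O.min'_le b hb
          have h5' : a0 ≤ a' := E.min'_le a' ha'
          have h6' : b0 ≤ b' := O.min'_le b' hb'
          omega
        rw [← hDdef] at h3
        omega
      set B := D.image (fun d => d.natAbs + 2) with hBdef
      have hBcard : t - 1 ≤ B.card := by
        have hcard := Finset.card_le_mul_card_image (s := D) (f := fun d => d.natAbs + 2) 2 ?_
        · rw [← hBdef] at hcard
          omega
        · intro y hy
          have hsub : (D.filter fun d => d.natAbs + 2 = y) ⊆ {((y:ℤ) - 2), -((y:ℤ) - 2)} := by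
            intro d hd
            rw [mem_filter] at hd
            obtain ⟨-, hdy⟩ := hd
            simp only [Finset.mem_insert, Finset.mem_singleton]
            omega
          exact le_trans (Finset.card_le_card hsub)
            ((Finset.card_insert_le _ _).trans (by simp))
      have hDprop : ∀ d ∈ D, ∃ a b : ℕ, a ∈ E ∧ b ∈ O ∧ d = (b:ℤ) - a := by
        intro d hd
        rw [hDdef, Finset.mem_union] at hd
        rcases hd with hd | hd
        · obtain ⟨a, ha, rfl⟩ := Finset.mem_image.mp hd
          exact ⟨a, b0, ha, O.min'_mem hO, rfl⟩
        · obtain ⟨b, hb, rfl⟩ := Finset.mem_image.mp hd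
          exact ⟨a0, b, E.min'_mem hE, hb, rfl⟩
      have hBmem : ∀ ℓ ∈ B, ℓ ∈ H.oddCycleLengths := by
        intro ℓ hℓ
        rw [hBdef, Finset.mem_image] at hℓ
        obtain ⟨d, hd, rfl⟩ := hℓ
        obtain ⟨a, b, haE, hbO, rfl⟩ := hDprop d hd
        obtain ⟨hapar, ha2, han, haadj⟩ := hEmem a haE
        obtain ⟨hbpar, hb2, hbn, hbadj⟩ := hOmem b hbO
        rcases Nat.lt_or_ge a b with hab | hab
        · have habs : ((b:ℤ) - a).natAbs = b - a := by omega
          rw [habs]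
          exact ⟨Nat.odd_iff.mpr (by omega), hasCycleLength_two_chords hcy ha2 hab hbn haadj hbadj⟩
        · have hba : b < a := by omega
          have habs : ((b:ℤ) - a).natAbs = a - b := by omega
          rw [habs]
          exact ⟨Nat.odd_iff.mpr (by omega), hasCycleLength_two_chords hcy hb2 hba han hbadj haadj⟩
      set M := max (a1 + 1) (c.length - a0 + 1) with hMdef
      have hMmem : M ∈ H.oddCycleLengths := by
        rcases max_cases (a1+1) (c.length - a0 + 1) with ⟨hmx, -⟩ | ⟨hmx, -⟩ <;>
          rw [hMdef, hmx]
        · exact ⟨Nat.odd_iff.mpr (by omega), hasCycleLength_near hcy ha1_2 ha1n ha1adj⟩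
        · exact ⟨Nat.odd_iff.mpr (by omega), hasCycleLength_far hcy ha0_2 ha0n ha0adj⟩
      have hMB : M ∉ B := by
        intro hmem
        rw [hBdef, Finset.mem_image] at hmem
        obtain ⟨d, hd, hdM⟩ := hmem
        obtain ⟨a, b, haE, hbO, rfl⟩ := hDprop d hd
        obtain ⟨hapar, ha2, han, haadj⟩ := hEmem a haE
        obtain ⟨hbpar, hb2, hbn, hbadj⟩ := hOmem b hbO
        have haa1 : a ≤ a1 := E.le_max' a haE
        have haa0 : a0 ≤ a := E.min'_le a haE
        have hM1 : a1 + 1 ≤ M := le_max_left _ _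
        have hM2 : c.length - a0 + 1 ≤ M := le_max_right _ _
        omega
      refine le_trans ?_ (key (insert M B) ?_)
      · rw [Finset.card_insert_of_notMem hMB]
        omega
      · intro ℓ hℓ
        rw [Finset.mem_insert] at hℓ
        rcases hℓ with rfl | hℓ
        · exact hMmem
        · exact hBmem ℓ hℓ
  · -- n odd
    have hn1 : c.length % 2 = 1 := Nat.odd_iff.mp hnodd
    set F := Pset.image (fun p => if (p+1) % 2 = 1 then p+1 else c.length - p + 1) with hFdef
    have hnotmem : c.length ∉ F := by
      intro hmem
      rw [hFdef, Finset.mem_image] at hmem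
      obtain ⟨p, hp, hfp⟩ := hmem
      obtain ⟨h2, hpn, _⟩ := hPmem p hp
      by_cases hcase : (p+1) % 2 = 1
      · rw [if_pos hcase] at hfp; omega
      · rw [if_neg hcase] at hfp; omega
    refine le_trans ?_ (key (insert c.length F) ?_)
    · rw [Finset.card_insert_of_notMem hnotmem]
      have hcard := Finset.card_le_mul_card_image (s := Pset)
        (f := fun p => if (p+1) % 2 = 1 then p+1 else c.length - p + 1) 2 ?_
      · rw [hPcard] at hcard
        rw [hFdef]
        omega
      · intro y hy
        have hsub : (Pset.filter fun p =>
            (if (p+1) % 2 = 1 then p+1 else c.length - p + 1) = y) ⊆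
            {y - 1, c.length + 1 - y} := by
          intro p hp
          rw [mem_filter] at hp
          obtain ⟨hpP, hfp⟩ := hp
          obtain ⟨h2, hpn, _⟩ := hPmem p hpP
          simp only [Finset.mem_insert, Finset.mem_singleton]
          by_cases hcase : (p+1) % 2 = 1
          · rw [if_pos hcase] at hfp; omega
          · rw [if_neg hcase] at hfp; omega
        exact le_trans (Finset.card_le_card hsub)
          ((Finset.card_insert_le _ _).trans (by simp))
    · intro ℓ hℓ
      rw [Finset.mem_insert] at hℓ
      rcases hℓ with rfl | hℓ
      · exact ⟨hnodd, x, c, hcy, rfl⟩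
      · rw [hFdef, Finset.mem_image] at hℓ
        obtain ⟨p, hp, rfl⟩ := hℓ
        obtain ⟨h2, hpn, hadj⟩ := hPmem p hp
        by_cases hcase : (p+1) % 2 = 1
        · rw [if_pos hcase]
          exact ⟨Nat.odd_iff.mpr hcase, hasCycleLength_near hcy h2 hpn hadj⟩
        · rw [if_neg hcase]
          refine ⟨Nat.odd_iff.mpr (by omega), hasCycleLength_far hcy h2 hpn hadj⟩
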